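/- Let F ∈ k[x₀,...,x₄] be a nonzero homogeneous polynomial of degree 3 and suppose the hypersurface Y = {F = 0} ⊂ ℙ⁴ has only finitely many singular points. Then no three distinct singular points of Y are collinear: if p, q, r ∈ k⁵ \ {0} represent three pairwise distinct points of ℙ⁴, all singular on Y, then p, q, r span a linear subspace of k⁵ of dimension 3. -/

import Mathlib

open MvPolynomial


-- homogeneous eval scaling
lemma aux_eval_smul {k : Type} [CommRing k] {σ : Type} {φ : MvPolynomial σ k} {n : ℕ}
    (h : φ.IsHomogeneous n) (c : k) (x : σ → k) :
    MvPolynomial.eval (c • x) φ = c ^ n * MvPolynomial.eval x φ := by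
  rw [eval_eq, eval_eq, Finset.mul_sum]
  apply Finset.sum_congr rfl
  intro d hd
  have hdeg : ∑ i ∈ d.support, d i = n := by
    have := h (mem_support_iff.mp hd)
    change Finsupp.weight (fun _ => 1) d = n at this
    rw [← Finsupp.degree_eq_weight_one] at this
    exact this
  have : ∏ i ∈ d.support, (c • x) i ^ d i
      = (∏ i ∈ d.support, c ^ d i) * ∏ i ∈ d.support, x i ^ d i := by
    rw [← Finset.prod_mul_distrib]
    apply Finset.prod_congr rfl
    intro i _
    simp [mul_pow]
  rw [this, Finset.prod_pow_eq_pow_sum, hdeg]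
  ring

-- pderiv preserves homogeneity
lemma aux_pderiv_hom {k : Type} [CommRing k] {σ : Type} {φ : MvPolynomial σ k} {n : ℕ}
    (h : φ.IsHomogeneous (n + 1)) (i : σ) : (MvPolynomial.pderiv i φ).IsHomogeneous n := by
  classical
  rw [φ.as_sum, map_sum]
  apply MvPolynomial.IsHomogeneous.sum
  intro d hd
  rw [pderiv_monomial]
  by_cases hdi : d i = 0
  · simp only [hdi, Nat.cast_zero, mul_zero, monomial_zero]
    exact isHomogeneous_zero _ _ _
  · apply isHomogeneous_monomial
    have hdeg : d.degree = n + 1 := by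
      rw [Finsupp.degree_eq_weight_one]
      exact h (mem_support_iff.mp hd)
    have hle : Finsupp.single i 1 ≤ d := by
      rw [Finsupp.single_le_iff]
      omega
    have hadd : (d - Finsupp.single i 1) + Finsupp.single i 1 = d :=
      tsub_add_cancel_of_le hle
    have hws : Finsupp.degree (Finsupp.single i (1:ℕ)) = 1 := by
      rw [Finsupp.degree_eq_weight_one, Finsupp.weight_apply, Finsupp.sum_single_index] <;> simp
    have h2 : (d - Finsupp.single i 1).degree + (Finsupp.single i (1:ℕ)).degree = d.degree := by
      rw [Finsupp.degree_eq_weight_one, ← map_add, hadd]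
    rw [hws, hdeg] at h2
    omega

noncomputable def linePoly {k : Type} [CommRing k] (h : MvPolynomial (Fin 5) k)
    (x y : Fin 5 → k) : Polynomial k :=
  MvPolynomial.eval₂ (Polynomial.C : k →+* Polynomial k)
    (fun i => Polynomial.C (y i) * Polynomial.X + Polynomial.C (x i)) h

lemma linePoly_eval {k : Type} [CommRing k] (h : MvPolynomial (Fin 5) k)
    (x y : Fin 5 → k) (t : k) :
    (linePoly h x y).eval t = MvPolynomial.eval (x + t • y) h := by
  unfold linePoly
  rw [show (Polynomial.eval t : Polynomial k → k) = (Polynomial.evalRingHom t : Polynomial k →+* k) from rfl]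
  rw [MvPolynomial.eval₂_comp_left]
  rw [show MvPolynomial.eval (x + t • y) = MvPolynomial.eval₂ (RingHom.id k) (x + t • y) from rfl]
  congr 1
  · ext a
    simp only [RingHom.coe_comp, Function.comp_apply, Polynomial.coe_evalRingHom,
      Polynomial.eval_C, RingHom.id_apply]
  · funext i
    simp only [Function.comp_apply, Polynomial.coe_evalRingHom, Polynomial.eval_add,
      Polynomial.eval_mul, Polynomial.eval_C, Polynomial.eval_X, Pi.add_apply, Pi.smul_apply,
      smul_eq_mul]
    ring

lemma linePoly_natDegree_le {k : Type} [CommRing k] {h : MvPolynomial (Fin 5) k} {n : ℕ}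
    (hh : h.IsHomogeneous n) (x y : Fin 5 → k) :
    (linePoly h x y).natDegree ≤ n := by
  unfold linePoly
  rw [MvPolynomial.eval₂_eq]
  apply Polynomial.natDegree_sum_le_of_forall_le
  intro d hd
  apply le_trans (Polynomial.natDegree_mul_le)
  rw [Polynomial.natDegree_C]
  simp only [zero_add]
  apply le_trans (Polynomial.natDegree_prod_le _ _)
  have hdeg : ∑ i ∈ d.support, d i = n := by
    have := hh (mem_support_iff.mp hd)
    change Finsupp.weight (fun _ => 1) d = n at this
    rw [← Finsupp.degree_eq_weight_one] at this
    exact this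
  calc ∑ i ∈ d.support, ((Polynomial.C (y i) * Polynomial.X + Polynomial.C (x i)) ^ d i).natDegree
      ≤ ∑ i ∈ d.support, d i * 1 := by
        apply Finset.sum_le_sum
        intro i _
        exact le_trans Polynomial.natDegree_pow_le
          (Nat.mul_le_mul_left _ Polynomial.natDegree_linear_le)
    _ ≤ n := by simp [hdeg]

lemma line_all_singular {k : Type} [Field k] [Infinite k]
    {h : MvPolynomial (Fin 5) k} (hh : h.IsHomogeneous 2)
    {x y : Fin 5 → k} (hx : MvPolynomial.eval x h = 0) (hy : MvPolynomial.eval y h = 0)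
    {a b : k} (ha : a ≠ 0) (hb : b ≠ 0)
    (hab : MvPolynomial.eval (a • x + b • y) h = 0) (t : k) :
    MvPolynomial.eval (x + t • y) h = 0 := by
  set P := linePoly h x y with hPdef
  set Q := linePoly h y x with hQdef
  have hPev : ∀ s, P.eval s = MvPolynomial.eval (x + s • y) h := linePoly_eval h x y
  have hQev : ∀ s, Q.eval s = MvPolynomial.eval (y + s • x) h := linePoly_eval h y x
  have hQd : Q.natDegree < 3 := lt_of_le_of_lt (linePoly_natDegree_le hh y x) (by norm_num)
  have hP0 : P.coeff 0 = 0 := by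
    rw [Polynomial.coeff_zero_eq_eval_zero, hPev 0]
    simpa using hx
  have hQ0 : Q.coeff 0 = 0 := by
    rw [Polynomial.coeff_zero_eq_eval_zero, hQev 0]
    simpa using hy
  -- key identity for s ≠ 0
  have key : ∀ s : k, s ≠ 0 → P.eval s = Q.coeff 1 * s + Q.coeff 2 := by
    intro s hs
    have h1 : x + s • y = s • (s⁻¹ • x + y) := by
      rw [smul_add, smul_smul, mul_inv_cancel₀ hs, one_smul]
    have h2 : P.eval s = s ^ 2 * Q.eval s⁻¹ := by
      rw [hPev, hQev, h1, aux_eval_smul hh]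
      ring_nf
    have h3 : Q.eval s⁻¹ = Q.coeff 0 + Q.coeff 1 * s⁻¹ + Q.coeff 2 * (s⁻¹)^2 := by
      rw [Polynomial.eval_eq_sum_range' hQd]
      simp [Finset.sum_range_succ]
    rw [h2, h3, hQ0]
    field_simp
    ring
  -- deduce P = C (Q.coeff 2) + C (Q.coeff 1) * X
  have hPeq : P = Polynomial.C (Q.coeff 2) + Polynomial.C (Q.coeff 1) * Polynomial.X := by
    have hD : P - (Polynomial.C (Q.coeff 2) + Polynomial.C (Q.coeff 1) * Polynomial.X) = 0 := by
      apply Polynomial.eq_zero_of_infinite_isRoot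
      apply Set.Infinite.mono (s := {s : k | s ≠ 0})
      · intro s hs
        simp only [Set.mem_setOf_eq, Polynomial.IsRoot, Polynomial.eval_sub,
          Polynomial.eval_add, Polynomial.eval_mul, Polynomial.eval_C, Polynomial.eval_X]
        rw [key s hs]
        ring
      · have h0 : ({0}ᶜ : Set k).Infinite := (Set.finite_singleton 0).infinite_compl
        convert h0 using 1
        ext s; simp
    exact sub_eq_zero.mp hD
  have hc2 : Q.coeff 2 = 0 := by
    have := hP0
    rw [hPeq] at this
    simpa using this
  have hc1 : Q.coeff 1 = 0 := by
    have h1 : a • x + b • y = a • (x + (a⁻¹ * b) • y) := by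
      rw [smul_add, smul_smul, ← mul_assoc, mul_inv_cancel₀ ha, one_mul]
    have h2 : MvPolynomial.eval (a • x + b • y) h = a ^ 2 * P.eval (a⁻¹ * b) := by
      rw [h1, aux_eval_smul hh, hPev]
    rw [hab] at h2
    rw [hPeq] at h2
    simp only [Polynomial.eval_add, Polynomial.eval_mul, Polynomial.eval_C,
      Polynomial.eval_X, hc2, zero_add] at h2
    have : a ^ 2 * (Q.coeff 1 * (a⁻¹ * b)) = a * b * Q.coeff 1 := by
      field_simp
    rw [this] at h2
    rcases mul_eq_zero.mp h2.symm with h' | h'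
    · exact absurd h' (mul_ne_zero ha hb)
    · exact h'
  rw [← hPev t, hPeq, hc1, hc2]
  simp


/-- For a nonzero homogeneous cubic `F` in 5 variables whose hypersurface
`{F = 0} ⊂ ℙ⁴` has only finitely many singular points, no three distinct singular
points are collinear: three pairwise distinct singular points span a 3-dimensional
linear subspace of `k⁵`. -/
theorem stmt_0 {k : Type} [Field k] [IsAlgClosed k] [CharZero k]
    (F : MvPolynomial (Fin 5) k) (hF : F ≠ 0) (hhom : F.IsHomogeneous 3)
    (hfin : {x : Projectivization k (Fin 5 → k) |
        ∀ i, MvPolynomial.eval x.rep (MvPolynomial.pderiv i F) = 0}.Finite)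
    (p q r : Fin 5 → k) (hp : p ≠ 0) (hq : q ≠ 0) (hr : r ≠ 0)
    (hpq : Projectivization.mk k p hp ≠ Projectivization.mk k q hq)
    (hpr : Projectivization.mk k p hp ≠ Projectivization.mk k r hr)
    (hqr : Projectivization.mk k q hq ≠ Projectivization.mk k r hr)
    (hsp : ∀ i, MvPolynomial.eval p (MvPolynomial.pderiv i F) = 0)
    (hsq : ∀ i, MvPolynomial.eval q (MvPolynomial.pderiv i F) = 0)
    (hsr : ∀ i, MvPolynomial.eval r (MvPolynomial.pderiv i F) = 0) :
    Module.finrank k (Submodule.span k ({p, q, r} : Set (Fin 5 → k))) = 3 := by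
  have hne_pq : ¬ ∃ c : k, c • q = p := by
    rintro ⟨c, hc⟩
    exact hpq ((Projectivization.mk_eq_mk_iff' k p q hp hq).mpr ⟨c, hc⟩)
  have hind : ∀ s t : k, s • p + t • q = 0 → s = 0 ∧ t = 0 := by
    intro s t hst
    by_cases hs : s = 0
    · subst hs
      rw [zero_smul, zero_add, smul_eq_zero] at hst
      exact ⟨rfl, hst.resolve_right hq⟩
    · exfalso
      apply hne_pq
      refine ⟨-(s⁻¹ * t), ?_⟩
      have hcalc : p = -(s⁻¹ * t) • q := by
        calc p = s⁻¹ • (s • p) := by rw [smul_smul, inv_mul_cancel₀ hs, one_smul]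
          _ = s⁻¹ • (-(t • q)) := by rw [eq_neg_of_add_eq_zero_left hst]
          _ = -(s⁻¹ * t) • q := by rw [smul_neg, smul_smul, neg_smul]
      exact hcalc.symm
  -- key: r is not on the line spanned by p and q
  have hrs : r ∉ Submodule.span k ({p, q} : Set (Fin 5 → k)) := by
    intro hmem
    obtain ⟨a, b, hab⟩ := Submodule.mem_span_pair.mp hmem
    have ha : a ≠ 0 := by
      rintro rfl
      rw [zero_smul, zero_add] at hab
      have hb : b ≠ 0 := by rintro rfl; rw [zero_smul] at hab; exact hr hab.symm
      exact hqr ((Projectivization.mk_eq_mk_iff' k r q hr hq).mpr ⟨b, hab⟩).symm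
    have hb : b ≠ 0 := by
      rintro rfl
      rw [zero_smul, add_zero] at hab
      exact hpr ((Projectivization.mk_eq_mk_iff' k r p hr hp).mpr ⟨a, hab⟩).symm
    have hhom' : F.IsHomogeneous (2 + 1) := hhom
    have hsing : ∀ (t : k) i, MvPolynomial.eval (p + t • q) (MvPolynomial.pderiv i F) = 0 := by
      intro t i
      exact line_all_singular (aux_pderiv_hom hhom' i) (hsp i) (hsq i) ha hb
        (by rw [hab]; exact hsr i) t
    have hnz : ∀ t : k, p + t • q ≠ 0 := by
      intro t h0
      have h1 : (1 : k) • p + t • q = 0 := by rwa [one_smul]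
      exact one_ne_zero (hind 1 t h1).1
    set f : k → Projectivization k (Fin 5 → k) :=
      fun t => Projectivization.mk k (p + t • q) (hnz t) with hfdef
    have hinj : Function.Injective f := by
      intro t t' htt
      obtain ⟨c, hc⟩ := (Projectivization.mk_eq_mk_iff' k _ _ (hnz t) (hnz t')).mp htt
      have h2 : (c - 1) • p + (c * t' - t) • q = 0 := by
        have : (c - 1) • p + (c * t' - t) • q = c • (p + t' • q) - (p + t • q) := by
          rw [smul_add, smul_smul, sub_smul, sub_smul, one_smul]
          abel
        rw [this, hc, sub_self]
      have h3 := hind _ _ h2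
      have hc1 : c = 1 := sub_eq_zero.mp h3.1
      have ht : c * t' - t = 0 := h3.2
      rw [hc1, one_mul] at ht
      exact (sub_eq_zero.mp ht).symm
    have hmem : ∀ t : k, f t ∈ {x : Projectivization k (Fin 5 → k) |
        ∀ i, MvPolynomial.eval x.rep (MvPolynomial.pderiv i F) = 0} := by
      intro t
      intro i
      have hmk : Projectivization.mk k (f t).rep (f t).rep_nonzero
          = Projectivization.mk k (p + t • q) (hnz t) := Projectivization.mk_rep (f t)
      obtain ⟨u, hu⟩ := (Projectivization.mk_eq_mk_iff k _ _ _ _).mp hmk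
      rw [← hu, Units.smul_def, aux_eval_smul (aux_pderiv_hom (show F.IsHomogeneous (2+1) from hhom) i),
        hsing t i, mul_zero]
    exact Set.infinite_of_injective_forall_mem hinj hmem hfin
  -- conclude: p, q, r are linearly independent
  have hpair : LinearIndependent k ![p, q] := LinearIndependent.pair_iff.mpr hind
  have hrange2 : Set.range ![p, q] = {p, q} := by
    ext v
    simp [Fin.exists_fin_two, or_comm]
  have hli : LinearIndependent k ![r, p, q] := by
    rw [show (![r, p, q] : Fin 3 → Fin 5 → k) = Fin.cons r ![p, q] from rfl]
    rw [linearIndependent_fin_cons]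
    exact ⟨hpair, by rwa [hrange2]⟩
  have hcard := finrank_span_eq_card hli
  have hrange3 : Set.range ![r, p, q] = ({p, q, r} : Set (Fin 5 → k)) := by
    ext v
    simp only [Set.mem_insert_iff, Set.mem_singleton_iff]
    constructor
    · rintro ⟨i, rfl⟩
      fin_cases i <;> simp
    · rintro (rfl | rfl | rfl)
      exacts [⟨1, rfl⟩, ⟨2, rfl⟩, ⟨0, rfl⟩]
  rw [hrange3] at hcard
  simpa using hcard
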